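/- Let r ≥ 1 and let real a, t ≥ 0. Then [1+(3+a)t]^r·([1+(2+a)t]^{r+1} − [1+at]^{r+1}) ≥ [1+(1+a)t]^r·([1+(4+a)t]^{r+1} − [1+(2+a)t]^{r+1}). -/

import Mathlib

open intervalIntegral Set

lemma hmono_aux {r : ℝ} (hr : 1 ≤ r) :
    MonotoneOn (fun y : ℝ => (1 + y) ^ r + (1 - y) ^ r) (Set.Icc (0:ℝ) 1) := by
  apply monotoneOn_of_deriv_nonneg (convex_Icc 0 1)
  · apply Continuous.continuousOn
    exact ((continuous_const.add continuous_id).rpow_const (fun x => Or.inr (by linarith))).add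
      ((continuous_const.sub continuous_id).rpow_const (fun x => Or.inr (by linarith)))
  · intro x hx
    have d1 : HasDerivAt (fun y : ℝ => (1 + y) ^ r) (1 * r * (1 + x) ^ (r - 1)) x :=
      (((hasDerivAt_id x).const_add 1)).rpow_const (Or.inr hr)
    have d2 : HasDerivAt (fun y : ℝ => (1 - y) ^ r) ((-1) * r * (1 - x) ^ (r - 1)) x :=
      (((hasDerivAt_id x).const_sub 1)).rpow_const (Or.inr hr)
    exact (d1.add d2).differentiableAt.differentiableWithinAt
  · intro x hx
    rw [interior_Icc] at hx
    have d1 : HasDerivAt (fun y : ℝ => (1 + y) ^ r) (1 * r * (1 + x) ^ (r - 1)) x :=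
      (((hasDerivAt_id x).const_add 1)).rpow_const (Or.inr hr)
    have d2 : HasDerivAt (fun y : ℝ => (1 - y) ^ r) ((-1) * r * (1 - x) ^ (r - 1)) x :=
      (((hasDerivAt_id x).const_sub 1)).rpow_const (Or.inr hr)
    rw [(show HasDerivAt (fun y : ℝ => (1 + y) ^ r + (1 - y) ^ r) (1 * r * (1 + x) ^ (r - 1) + (-1) * r * (1 - x) ^ (r - 1)) x from d1.add d2).deriv]
    have h1 : (1 - x) ^ (r - 1) ≤ (1 + x) ^ (r - 1) :=
      Real.rpow_le_rpow (by linarith [hx.2]) (by linarith [hx.1]) (by linarith)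
    have hr0 : (0:ℝ) ≤ r := by linarith
    nlinarith [h1, hr0]

lemma KL_aux (r b d u : ℝ) (hr : 1 ≤ r) (hb : 0 < b) (hbd : b ≤ d) (hu : 0 ≤ u)
    (hub : u ≤ b) :
    b ^ r * ((d + u) ^ r + (d - u) ^ r) ≤ d ^ r * ((b + u) ^ r + (b - u) ^ r) := by
  have hd : 0 < d := lt_of_lt_of_le hb hbd
  have hub' : u / b ∈ Set.Icc (0:ℝ) 1 := ⟨div_nonneg hu hb.le, (div_le_one hb).2 hub⟩
  have hud' : u / d ∈ Set.Icc (0:ℝ) 1 := ⟨div_nonneg hu hd.le, (div_le_one hd).2 (hub.trans hbd)⟩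
  have key := hmono_aux hr hud' hub' (div_le_div_of_nonneg_left hu hb hbd)
  -- rewrite (d+u)^r = d^r * (1+u/d)^r etc.
  have e1 : (d + u) ^ r = d ^ r * (1 + u / d) ^ r := by
    rw [← Real.mul_rpow hd.le (by linarith [hud'.1])]
    congr 1; field_simp
  have e2 : (d - u) ^ r = d ^ r * (1 - u / d) ^ r := by
    rw [← Real.mul_rpow hd.le (by linarith [hud'.2])]
    congr 1; field_simp
  have e3 : (b + u) ^ r = b ^ r * (1 + u / b) ^ r := by
    rw [← Real.mul_rpow hb.le (by linarith [hub'.1])]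
    congr 1; field_simp
  have e4 : (b - u) ^ r = b ^ r * (1 - u / b) ^ r := by
    rw [← Real.mul_rpow hb.le (by linarith [hub'.2])]
    congr 1; field_simp
  rw [e1, e2, e3, e4]
  have hbr : (0:ℝ) ≤ b ^ r := Real.rpow_nonneg hb.le r
  have hdr : (0:ℝ) ≤ d ^ r := Real.rpow_nonneg hd.le r
  calc b ^ r * (d ^ r * (1 + u / d) ^ r + d ^ r * (1 - u / d) ^ r)
      = b ^ r * d ^ r * ((1 + u / d) ^ r + (1 - u / d) ^ r) := by ring
    _ ≤ b ^ r * d ^ r * ((1 + u / b) ^ r + (1 - u / b) ^ r) := by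
        apply mul_le_mul_of_nonneg_left key (mul_nonneg hbr hdr)
    _ = d ^ r * (b ^ r * (1 + u / b) ^ r + b ^ r * (1 - u / b) ^ r) := by ring

lemma main_aux (r A t : ℝ) (hr : 1 ≤ r) (hA : 0 < A) (ht : 0 ≤ t) :
    (A + t) ^ r * ((A + 4 * t) ^ (r + 1) - (A + 2 * t) ^ (r + 1)) ≤
      (A + 3 * t) ^ r * ((A + 2 * t) ^ (r + 1) - A ^ (r + 1)) := by
  have hr1 : (0:ℝ) < r + 1 := by linarith
  have cont : ∀ m : ℝ, Continuous (fun s : ℝ => (m + s) ^ r) := fun m =>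
    (continuous_const.add continuous_id).rpow_const (fun x => Or.inr (by linarith))
  have cont' : ∀ m : ℝ, Continuous (fun s : ℝ => (m - s) ^ r) := fun m =>
    (continuous_const.sub continuous_id).rpow_const (fun x => Or.inr (by linarith))
  -- J1, J2
  set J1 : ℝ := ∫ x in A..(A + 2*t), x ^ r with hJ1
  set J2 : ℝ := ∫ x in (A + 2*t)..(A + 4*t), x ^ r with hJ2
  have hJ1v : J1 = ((A + 2*t) ^ (r+1) - A ^ (r+1)) / (r+1) :=
    integral_rpow (Or.inl (by linarith))
  have hJ2v : J2 = ((A + 4*t) ^ (r+1) - (A + 2*t) ^ (r+1)) / (r+1) :=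
    integral_rpow (Or.inl (by linarith))
  -- substitutions
  have s1 : (∫ s in (0:ℝ)..(2*t), (A + s) ^ r) = J1 := by
    rw [hJ1]
    have := integral_comp_add_left (fun x : ℝ => x ^ r) A (a := 0) (b := 2*t)
    simpa using this
  have s2 : (∫ s in (0:ℝ)..(2*t), (A + 2*t + s) ^ r) = J2 := by
    rw [hJ2]
    have := integral_comp_add_left (fun x : ℝ => x ^ r) (A + 2*t) (a := 0) (b := 2*t)
    rw [show (A + 2*t) + 2*t = A + 4*t by ring] at this
    simpa using this
  have s3 : (∫ s in (0:ℝ)..(2*t), (A + 2*t - s) ^ r) = J1 := by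
    rw [hJ1]
    have := integral_comp_sub_left (fun x : ℝ => x ^ r) (A + 2*t) (a := 0) (b := 2*t)
    simp only [sub_zero] at this
    rw [show (A + 2*t) - 2*t = A by ring] at this
    exact this
  have s4 : (∫ s in (0:ℝ)..(2*t), (A + 4*t - s) ^ r) = J2 := by
    rw [hJ2]
    have := integral_comp_sub_left (fun x : ℝ => x ^ r) (A + 4*t) (a := 0) (b := 2*t)
    simp only [sub_zero] at this
    rw [show (A + 4*t) - 2*t = A + 2*t by ring] at this
    exact this
  -- integrability
  have i1 : IntervalIntegrable (fun s : ℝ => (A + s) ^ r) MeasureTheory.volume 0 (2*t) :=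
    (cont A).intervalIntegrable _ _
  have i2 : IntervalIntegrable (fun s : ℝ => (A + 2*t + s) ^ r) MeasureTheory.volume 0 (2*t) :=
    (cont (A + 2*t)).intervalIntegrable _ _
  have i3 : IntervalIntegrable (fun s : ℝ => (A + 2*t - s) ^ r) MeasureTheory.volume 0 (2*t) :=
    (cont' (A + 2*t)).intervalIntegrable _ _
  have i4 : IntervalIntegrable (fun s : ℝ => (A + 4*t - s) ^ r) MeasureTheory.volume 0 (2*t) :=
    (cont' (A + 4*t)).intervalIntegrable _ _
  -- pointwise inequality
  have hpw : ∀ s ∈ Set.Icc (0:ℝ) (2*t),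
      (A + t) ^ r * ((A + 2*t + s) ^ r + (A + 4*t - s) ^ r) ≤
      (A + 3*t) ^ r * ((A + s) ^ r + (A + 2*t - s) ^ r) := by
    intro s hs
    obtain ⟨hs0, hs2⟩ := hs
    have hB : (0:ℝ) < A + t := by linarith
    have hBD : A + t ≤ A + 3*t := by linarith
    rcases le_total t s with hts | hts
    · have h := KL_aux r (A + t) (A + 3*t) (s - t) hr hB hBD (by linarith) (by linarith)
      rw [show A + 3*t + (s - t) = A + 2*t + s by ring,
          show A + 3*t - (s - t) = A + 4*t - s by ring,
          show A + t + (s - t) = A + s by ring,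
          show A + t - (s - t) = A + 2*t - s by ring] at h
      exact h
    · have h := KL_aux r (A + t) (A + 3*t) (t - s) hr hB hBD (by linarith) (by linarith)
      rw [show A + 3*t + (t - s) = A + 4*t - s by ring,
          show A + 3*t - (t - s) = A + 2*t + s by ring,
          show A + t + (t - s) = A + 2*t - s by ring,
          show A + t - (t - s) = A + s by ring] at h
      linarith [h]
  -- integral inequality
  have hmono := intervalIntegral.integral_mono_on (μ := MeasureTheory.volume)
    (by linarith : (0:ℝ) ≤ 2*t)
    (((continuous_const.mul ((cont (A+2*t)).add (cont' (A+4*t)))).intervalIntegrable 0 (2*t)))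
    (((continuous_const.mul ((cont A).add (cont' (A+2*t)))).intervalIntegrable 0 (2*t)))
    hpw
  -- compute both sides
  have lhs_eq : (∫ s in (0:ℝ)..(2*t),
      (A + t) ^ r * ((A + 2*t + s) ^ r + (A + 4*t - s) ^ r)) = (A + t) ^ r * (2 * J2) := by
    rw [intervalIntegral.integral_const_mul, intervalIntegral.integral_add i2 i4, s2, s4]
    ring
  have rhs_eq : (∫ s in (0:ℝ)..(2*t),
      (A + 3*t) ^ r * ((A + s) ^ r + (A + 2*t - s) ^ r)) = (A + 3*t) ^ r * (2 * J1) := by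
    rw [intervalIntegral.integral_const_mul, intervalIntegral.integral_add i1 i3, s1, s3]
    ring
  simp only [Pi.mul_apply, Pi.add_apply] at hmono
  rw [lhs_eq, rhs_eq] at hmono
  -- conclude
  have h2 : (A + t) ^ r * J2 ≤ (A + 3*t) ^ r * J1 := by linarith
  rw [hJ1v] at h2
  rw [hJ2v] at h2
  rw [div_eq_mul_inv, div_eq_mul_inv] at h2
  have hinv : (0:ℝ) < (r+1) := hr1
  have := mul_le_mul_of_nonneg_right h2 hinv.le
  calc (A + t) ^ r * ((A + 4 * t) ^ (r + 1) - (A + 2 * t) ^ (r + 1))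
      = ((A + t) ^ r * (((A + 4*t) ^ (r+1) - (A + 2*t) ^ (r+1)) * (r+1)⁻¹)) * (r+1) := by
        field_simp
    _ ≤ ((A + 3*t) ^ r * (((A + 2*t) ^ (r+1) - A ^ (r+1)) * (r+1)⁻¹)) * (r+1) := by
        exact this
    _ = (A + 3 * t) ^ r * ((A + 2 * t) ^ (r + 1) - A ^ (r + 1)) := by field_simp

theorem stmt_7 (r a t : ℝ) (hr : 1 ≤ r) (ha : 0 ≤ a) (ht : 0 ≤ t) :
    (1 + (1 + a) * t) ^ r *
        ((1 + (4 + a) * t) ^ (r + 1) - (1 + (2 + a) * t) ^ (r + 1)) ≤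
      (1 + (3 + a) * t) ^ r *
        ((1 + (2 + a) * t) ^ (r + 1) - (1 + a * t) ^ (r + 1)) := by
  have h := main_aux r (1 + a * t) t hr (by nlinarith) ht
  rw [show 1 + a*t + t = 1 + (1+a)*t by ring, show 1 + a*t + 2*t = 1 + (2+a)*t by ring,
      show 1 + a*t + 3*t = 1 + (3+a)*t by ring, show 1 + a*t + 4*t = 1 + (4+a)*t by ring] at h
  exact h
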